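/- Let x_p, x_q ∈ ℝ^{2n}, F = e_n ⊗ I₂, Q = I_{2n} − F(FᵀF)⁻¹Fᵀ, R(θ) = I_n ⊗ r(θ). Define J₁*(θ) = ½‖x_q − R(θ)x_p‖²_Q := ½(x_q − R(θ)x_p)ᵀ Q (x_q − R(θ)x_p). Then J₁*(θ) = α cos θ + β sin θ + γ, where α = −x_qᵀ(I_n ⊗ I₂)Q x_p, β = −x_qᵀ(I_n ⊗ J)Q x_p with J = [[0,−1],[1,0]], and γ = ½(x_pᵀQx_p + x_qᵀQx_q). -/

import Mathlib

open Matrix Real Kronecker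

noncomputable def rot (θ : ℝ) : Matrix (Fin 2) (Fin 2) ℝ :=
  !![Real.cos θ, -Real.sin θ; Real.sin θ, Real.cos θ]

noncomputable def Fmat (n : ℕ) : Matrix (Fin n × Fin 2) (Fin 1 × Fin 2) ℝ :=
  (Matrix.of fun (_ : Fin n) (_ : Fin 1) => (1 : ℝ)) ⊗ₖ (1 : Matrix (Fin 2) (Fin 2) ℝ)

noncomputable def Qmat (n : ℕ) : Matrix (Fin n × Fin 2) (Fin n × Fin 2) ℝ :=
  1 - Fmat n * ((Fmat n)ᵀ * Fmat n)⁻¹ * (Fmat n)ᵀ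

noncomputable def Rblk (m : ℕ) (θ : ℝ) : Matrix (Fin m × Fin 2) (Fin m × Fin 2) ℝ :=
  (1 : Matrix (Fin m) (Fin m) ℝ) ⊗ₖ rot θ

noncomputable def Jmat : Matrix (Fin 2) (Fin 2) ℝ := !![0, -1; 1, 0]

noncomputable def Kmat (n : ℕ) : Matrix (Fin n × Fin 2) (Fin n × Fin 2) ℝ :=
  (1 : Matrix (Fin n) (Fin n) ℝ) ⊗ₖ Jmat

lemma FtF (n : ℕ) : (Fmat n)ᵀ * Fmat n = (n : ℝ) • 1 := by
  ext ⟨i, i2⟩ ⟨j, j2⟩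
  simp [Fmat, Matrix.mul_apply, Matrix.kroneckerMap_apply, Matrix.one_apply,
    Fintype.sum_prod_type, Finset.mul_sum]
  by_cases h : i2 = j2 <;> simp [h, Subsingleton.elim i j]
  exact fun h2 => absurd h2.symm h

lemma FtF_inv (n : ℕ) (hn : 1 ≤ n) :
    ((Fmat n)ᵀ * Fmat n)⁻¹ = ((n : ℝ)⁻¹) • 1 := by
  have hne : (n : ℝ) ≠ 0 := by positivity
  apply Matrix.inv_eq_right_inv
  rw [FtF, smul_mul_assoc, mul_smul_comm, one_mul, smul_smul, mul_inv_cancel₀ hne, one_smul]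

lemma Pmat_eq (n : ℕ) (hn : 1 ≤ n) :
    Fmat n * ((Fmat n)ᵀ * Fmat n)⁻¹ * (Fmat n)ᵀ
      = ((n : ℝ)⁻¹) • ((Matrix.of fun (_ _ : Fin n) => (1 : ℝ)) ⊗ₖ (1 : Matrix (Fin 2) (Fin 2) ℝ)) := by
  rw [FtF_inv n hn, Matrix.mul_smul, Matrix.smul_mul, Matrix.mul_one]
  congr 1
  rw [Fmat, ← Matrix.kroneckerMap_transpose, ← Matrix.mul_kronecker_mul]
  congr 1
  ext i j; simp [Matrix.mul_apply]
  rw [Matrix.transpose_one, Matrix.one_mul]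

lemma Kcomm (n : ℕ) (hn : 1 ≤ n) : Qmat n * Kmat n = Kmat n * Qmat n := by
  unfold Qmat Kmat
  rw [Pmat_eq n hn, Matrix.sub_mul, Matrix.mul_sub, Matrix.one_mul, Matrix.mul_one,
    Matrix.smul_mul, Matrix.mul_smul,
    ← Matrix.mul_kronecker_mul, ← Matrix.mul_kronecker_mul,
    Matrix.mul_one, Matrix.one_mul, Matrix.mul_one, Matrix.one_mul]

lemma Qsymm (n : ℕ) (hn : 1 ≤ n) : (Qmat n)ᵀ = Qmat n := by
  unfold Qmat
  rw [Pmat_eq n hn, Matrix.transpose_sub, Matrix.transpose_one, Matrix.transpose_smul,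
    ← Matrix.kroneckerMap_transpose, Matrix.transpose_one]
  have hones : (Matrix.of fun (_ _ : Fin n) => (1 : ℝ))ᵀ = Matrix.of fun _ _ => 1 := by
    ext i j; rfl
  rw [hones]

lemma Ktrans (n : ℕ) : (Kmat n)ᵀ = -(Kmat n) := by
  ext ⟨i, i2⟩ ⟨j, j2⟩
  simp only [Kmat, Matrix.transpose_apply, Matrix.kroneckerMap_apply, Matrix.neg_apply,
    Matrix.one_apply]
  fin_cases i2 <;> fin_cases j2 <;>
    by_cases h : i = j <;> simp [h, eq_comm, Jmat]

lemma Ksq (n : ℕ) : Kmat n * Kmat n = -1 := by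
  unfold Kmat
  rw [← Matrix.mul_kronecker_mul, one_mul]
  have : Jmat * Jmat = -1 := by
    unfold Jmat
    ext i j
    fin_cases i <;> fin_cases j <;> simp [Matrix.mul_apply, Fin.sum_univ_succ, Matrix.one_apply]
  rw [this]
  ext ⟨i, i2⟩ ⟨j, j2⟩
  simp [Matrix.kroneckerMap_apply, Matrix.one_apply, Prod.ext_iff]
  by_cases h : i = j <;> by_cases h2 : i2 = j2 <;> simp [h, h2]

lemma Rdecomp (n : ℕ) (θ : ℝ) :
    Rblk n θ = Real.cos θ • (1 : Matrix (Fin n × Fin 2) (Fin n × Fin 2) ℝ)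
      + Real.sin θ • Kmat n := by
  unfold Rblk Kmat
  have : rot θ = Real.cos θ • (1 : Matrix (Fin 2) (Fin 2) ℝ) + Real.sin θ • Jmat := by
    unfold rot Jmat
    ext i j
    fin_cases i <;> fin_cases j <;> simp [Matrix.one_apply] <;> ring
  rw [this, Matrix.kronecker_add, Matrix.kronecker_smul, Matrix.kronecker_smul,
    Matrix.one_kronecker_one]

lemma dot_aux {m : Type*} [Fintype m] (A B : Matrix m m ℝ) (x y : m → ℝ) :
    (A.mulVec x) ⬝ᵥ (B.mulVec y) = x ⬝ᵥ ((Aᵀ * B).mulVec y) := by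
  calc (A.mulVec x) ⬝ᵥ (B.mulVec y)
      = (Matrix.vecMul x Aᵀ) ⬝ᵥ (B.mulVec y) := by rw [Matrix.vecMul_transpose]
    _ = x ⬝ᵥ Aᵀ.mulVec (B.mulVec y) := (Matrix.dotProduct_mulVec _ _ _).symm
    _ = x ⬝ᵥ ((Aᵀ * B).mulVec y) := by rw [Matrix.mulVec_mulVec]

theorem J1star_sinusoidal (n : ℕ) (hn : 1 ≤ n) (θ : ℝ) (xp xq : Fin n × Fin 2 → ℝ)
    (α β γ : ℝ)
    (hα : α = -(xq ⬝ᵥ (((1 : Matrix (Fin n) (Fin n) ℝ) ⊗ₖ (1 : Matrix (Fin 2) (Fin 2) ℝ)) * Qmat n).mulVec xp))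
    (hβ : β = -(xq ⬝ᵥ (((1 : Matrix (Fin n) (Fin n) ℝ) ⊗ₖ Jmat) * Qmat n).mulVec xp))
    (hγ : γ = (1 / 2) * (xp ⬝ᵥ (Qmat n).mulVec xp + xq ⬝ᵥ (Qmat n).mulVec xq)) :
    (1 / 2) * ((xq - (Rblk n θ).mulVec xp) ⬝ᵥ (Qmat n).mulVec (xq - (Rblk n θ).mulVec xp))
      = α * Real.cos θ + β * Real.sin θ + γ := by
  have hK : ((1 : Matrix (Fin n) (Fin n) ℝ) ⊗ₖ Jmat) = Kmat n := rfl
  have hα' : α = -(xq ⬝ᵥ (Qmat n).mulVec xp) := by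
    rw [hα, Matrix.one_kronecker_one, one_mul]
  have hβ' : β = -(xq ⬝ᵥ (Qmat n * Kmat n).mulVec xp) := by
    rw [hβ, hK, ← Kcomm n hn]
  have hc := Kcomm n hn
  have h2 : Kmat n * Qmat n * Kmat n = -Qmat n := by
    rw [← hc, Matrix.mul_assoc, Ksq, Matrix.mul_neg, Matrix.mul_one]
  -- R^T Q R = Q
  have hRQR : (Rblk n θ)ᵀ * Qmat n * Rblk n θ = Qmat n := by
    rw [Rdecomp, Matrix.transpose_add, Matrix.transpose_smul, Matrix.transpose_smul,
      Matrix.transpose_one, Ktrans]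
    simp only [Matrix.add_mul, Matrix.mul_add, Matrix.smul_mul, Matrix.mul_smul,
      Matrix.one_mul, Matrix.mul_one, Matrix.neg_mul, Matrix.mul_neg, smul_neg,
      smul_smul, Matrix.mul_assoc]
    rw [← Matrix.mul_assoc (Kmat n) (Qmat n) (Kmat n), h2, ← hc]
    have pyth : Real.sin θ * Real.sin θ + Real.cos θ * Real.cos θ = 1 := by
      have := Real.sin_sq_add_cos_sq θ; nlinarith [this]
    match_scalars <;> nlinarith [pyth]
  rw [Matrix.mulVec_sub, sub_dotProduct, dotProduct_sub, dotProduct_sub]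
  have hcross : ((Rblk n θ).mulVec xp) ⬝ᵥ (Qmat n).mulVec xq
      = xq ⬝ᵥ (Qmat n).mulVec ((Rblk n θ).mulVec xp) := by
    rw [dotProduct_comm, dot_aux, Qsymm n hn, ← Matrix.mulVec_mulVec]
  have hquad : ((Rblk n θ).mulVec xp) ⬝ᵥ (Qmat n).mulVec ((Rblk n θ).mulVec xp)
      = xp ⬝ᵥ (Qmat n).mulVec xp := by
    rw [Matrix.mulVec_mulVec, dot_aux, ← Matrix.mul_assoc, hRQR]
  have hQR : xq ⬝ᵥ (Qmat n).mulVec ((Rblk n θ).mulVec xp)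
      = Real.cos θ * (xq ⬝ᵥ (Qmat n).mulVec xp)
        + Real.sin θ * (xq ⬝ᵥ (Qmat n * Kmat n).mulVec xp) := by
    rw [Matrix.mulVec_mulVec, Rdecomp, Matrix.mul_add, Matrix.mul_smul, Matrix.mul_smul,
      Matrix.mul_one, Matrix.add_mulVec, dotProduct_add, Matrix.smul_mulVec,
      Matrix.smul_mulVec, dotProduct_smul, dotProduct_smul]
    simp [smul_eq_mul]
  rw [hcross, hquad, hQR, hα', hβ', hγ]
  ring
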